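/- Let δ > 0, β₀ > 0 and β₁ < −δ/(β₀(1 − 2h(x₀))). Then h(x₀) < (δ + β₀β₁)/(2β₀β₁) < 1/2, and the equation sin(x)/x = (δ + β₀β₁)/(2β₀β₁) has a unique solution x_c among all x > 0; moreover x_c ∈ (0, π). -/

import Mathlib

open Real Set

/-- `h(x) = sin(x)/x`. -/
noncomputable def hfun (x : ℝ) : ℝ := Real.sin x / x

/-- `x₀`, the smallest `x > 0` with `x = tan x` and `h(x) > 0` (numerically `x₀ ≈ 7.725`). -/
noncomputable def xZero : ℝ := sInf {x : ℝ | 0 < x ∧ x = Real.tan x ∧ 0 < hfun x}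

/-- auxiliary function: numerator of the derivative of `hfun`. -/
noncomputable def gfun (x : ℝ) : ℝ := x * Real.cos x - Real.sin x

lemma gfun_hasDerivAt (x : ℝ) : HasDerivAt gfun (-(x * Real.sin x)) x := by
  have h : HasDerivAt gfun
      (1 * Real.cos x + id x * -Real.sin x - Real.cos x) x :=
    ((hasDerivAt_id x).mul (Real.hasDerivAt_cos x)).sub (Real.hasDerivAt_sin x)
  convert h using 1
  simp only [id_eq]
  ring

lemma gfun_cont : Continuous gfun := by
  unfold gfun; continuity

lemma gfun_strictAntiOn {a b : ℝ} (hpos : ∀ x ∈ Ioo a b, 0 < x * Real.sin x) :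
    StrictAntiOn gfun (Icc a b) := by
  apply strictAntiOn_of_deriv_neg (convex_Icc a b) gfun_cont.continuousOn
  intro x hx
  rw [interior_Icc] at hx
  rw [(gfun_hasDerivAt x).deriv]
  linarith [hpos x hx]

lemma gfun_strictAntiOn_I1 : StrictAntiOn gfun (Icc 0 π) := by
  apply gfun_strictAntiOn
  intro x hx
  exact mul_pos hx.1 (Real.sin_pos_of_pos_of_lt_pi hx.1 hx.2)

lemma sin_pos_of_mem_2pi_3pi {x : ℝ} (hx : x ∈ Ioo (2*π) (3*π)) : 0 < Real.sin x := by
  have h : Real.sin x = Real.sin (x - 2*π) := (Real.sin_sub_two_pi x).symm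
  rw [h]
  exact Real.sin_pos_of_pos_of_lt_pi (by linarith [hx.1]) (by linarith [hx.2])

lemma gfun_strictAntiOn_I2 : StrictAntiOn gfun (Icc (2*π) (3*π)) := by
  apply gfun_strictAntiOn
  intro x hx
  have hpi := Real.pi_pos
  exact mul_pos (by linarith [hx.1]) (sin_pos_of_mem_2pi_3pi hx)

lemma gfun_two_pi : gfun (2*π) = 2*π := by
  unfold gfun
  simp [Real.cos_two_pi, Real.sin_two_pi]

lemma gfun_five_pi_div_two : gfun (5*π/2) = -1 := by
  unfold gfun
  have h : (5*π/2 : ℝ) = π/2 + 2*π := by ring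
  rw [h, Real.cos_add_two_pi, Real.sin_add_two_pi, Real.cos_pi_div_two, Real.sin_pi_div_two]
  ring

/-- Existence of the critical point. -/
lemma exists_xstar : ∃ x, x ∈ Ioo (2*π) (5*π/2) ∧ gfun x = 0 := by
  have hab : (2*π : ℝ) ≤ 5*π/2 := by linarith [Real.pi_pos]
  have h := intermediate_value_Ioo' hab gfun_cont.continuousOn
  have h0 : (0:ℝ) ∈ Ioo (gfun (5*π/2)) (gfun (2*π)) := by
    rw [gfun_two_pi, gfun_five_pi_div_two]
    constructor <;> [linarith; linarith [Real.pi_pos]]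
  obtain ⟨x, hx, hgx⟩ := h h0
  exact ⟨x, hx, hgx⟩

lemma xZero_facts : 2*π < xZero ∧ xZero < 5*π/2 ∧ gfun xZero = 0 := by
  obtain ⟨x, hx, hgx⟩ := exists_xstar
  have hpi := Real.pi_pos
  have hxpos : 0 < x := by linarith [hx.1]
  have hcos : 0 < Real.cos x := by
    have h : Real.cos x = Real.cos (x - 2*π) := (Real.cos_sub_two_pi x).symm
    rw [h]
    apply Real.cos_pos_of_mem_Ioo
    constructor <;> [linarith [hx.1]; linarith [hx.2]]
  have hsin : Real.sin x = x * Real.cos x := by unfold gfun at hgx; linarith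
  have hmem : x ∈ {x : ℝ | 0 < x ∧ x = Real.tan x ∧ 0 < hfun x} := by
    refine ⟨hxpos, ?_, ?_⟩
    · rw [Real.tan_eq_sin_div_cos, hsin]
      field_simp
    · unfold hfun
      rw [hsin]
      positivity
  have hlb : ∀ y ∈ {x : ℝ | 0 < x ∧ x = Real.tan x ∧ 0 < hfun x}, x ≤ y := by
    rintro y ⟨hy0, hytan, hyh⟩
    have hsiny : 0 < Real.sin y := by
      rcases div_pos_iff.mp hyh with ⟨h1, _⟩ | ⟨_, h2⟩
      · exact h1
      · linarith
    by_contra hlt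
    push_neg at hlt
    -- y < x < 5π/2 < 3π
    have hy3 : y < 3*π := by linarith [hx.2]
    rcases le_or_gt y (2*π) with hy2 | hy2
    · -- y ≤ 2π : derive contradiction
      have hylt_pi : y < π := by
        by_contra hge
        push_neg at hge
        have : 0 ≤ Real.sin (y - π) :=
          Real.sin_nonneg_of_nonneg_of_le_pi (by linarith) (by linarith)
        have heq : Real.sin y = -Real.sin (y - π) := by
          have : Real.sin ((y - π) + π) = -Real.sin (y - π) := Real.sin_add_pi _
          simpa using this
        linarith
      rcases lt_trichotomy y (π/2) with hy | hy | hy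
      · have := Real.lt_tan hy0 hy
        linarith [hytan ▸ this]
      · rw [hy, Real.tan_pi_div_two] at hytan
        linarith
      · have hcosy : Real.cos y < 0 :=
          Real.cos_neg_of_pi_div_two_lt_of_lt hy (by linarith)
        have : Real.tan y < 0 := by
          rw [Real.tan_eq_sin_div_cos]
          exact div_neg_of_pos_of_neg hsiny hcosy
        linarith [hytan ▸ this]
    · -- 2π < y < x : g y = 0 by tan, contradict strict anti
      have hcosy : Real.cos y ≠ 0 := by
        intro h0
        rw [Real.tan_eq_sin_div_cos, h0, div_zero] at hytan
        linarith
      have hgy : gfun y = 0 := by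
        rw [Real.tan_eq_sin_div_cos] at hytan
        unfold gfun
        field_simp at hytan
        linarith
      have hymem : y ∈ Icc (2*π) (3*π) := ⟨le_of_lt hy2, le_of_lt hy3⟩
      have hxmem : x ∈ Icc (2*π) (3*π) := ⟨le_of_lt hx.1, by linarith [hx.2]⟩
      have := gfun_strictAntiOn_I2 hymem hxmem hlt
      rw [hgx, hgy] at this
      exact lt_irrefl 0 this
  have : xZero = x := IsLeast.csInf_eq ⟨hmem, hlb⟩
  rw [this]
  exact ⟨hx.1, hx.2, hgx⟩

lemma hfun_xZero_eq_cos : hfun xZero = Real.cos xZero := by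
  obtain ⟨h1, h2, h3⟩ := xZero_facts
  have hxpos : 0 < xZero := by linarith [Real.pi_pos]
  have hsin : Real.sin xZero = xZero * Real.cos xZero := by unfold gfun at h3; linarith
  unfold hfun
  rw [hsin]
  field_simp

lemma hfun_hasDerivAt {x : ℝ} (hx : x ≠ 0) : HasDerivAt hfun (gfun x / x ^ 2) x := by
  have h : HasDerivAt hfun
      ((Real.cos x * id x - Real.sin x * 1) / id x ^ 2) x :=
    (Real.hasDerivAt_sin x).div (hasDerivAt_id x) hx
  convert h using 1
  unfold gfun
  simp only [id_eq]
  ring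

lemma hfun_continuousOn {s : Set ℝ} (hs : ∀ x ∈ s, x ≠ 0) : ContinuousOn hfun s :=
  Real.continuous_sin.continuousOn.div continuousOn_id hs

lemma hfun_strictAntiOn : StrictAntiOn hfun (Ioc 0 π) := by
  apply strictAntiOn_of_deriv_neg (convex_Ioc 0 π)
    (hfun_continuousOn (fun x hx => hx.1.ne'))
  intro x hx
  rw [interior_Ioc] at hx
  rw [(hfun_hasDerivAt hx.1.ne').deriv]
  apply div_neg_of_neg_of_pos _ (pow_pos hx.1 2)
  have h0 : gfun 0 = 0 := by unfold gfun; simp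
  have := gfun_strictAntiOn_I1 (left_mem_Icc.mpr Real.pi_pos.le)
    ⟨hx.1.le, hx.2.le⟩ hx.1
  rw [h0] at this
  exact this

lemma hfun_le_on_2pi_3pi {y : ℝ} (hy : y ∈ Icc (2*π) (3*π)) : hfun y ≤ hfun xZero := by
  obtain ⟨h1, h2, h3⟩ := xZero_facts
  have hpi := Real.pi_pos
  have hxmem : xZero ∈ Icc (2*π) (3*π) := ⟨h1.le, by linarith⟩
  rcases le_or_gt y xZero with hle | hlt
  · -- increasing on [2π, xZero]
    have hmono : StrictMonoOn hfun (Icc (2*π) xZero) := by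
      apply strictMonoOn_of_deriv_pos (convex_Icc _ _)
        (hfun_continuousOn (fun x hx => by
          rcases hx with ⟨ha, _⟩; intro h0; rw [h0] at ha; linarith))
      intro x hx
      rw [interior_Icc] at hx
      have hxpos : 0 < x := by linarith [hx.1]
      rw [(hfun_hasDerivAt hxpos.ne').deriv]
      apply div_pos _ (by positivity)
      have := gfun_strictAntiOn_I2 ⟨hx.1.le, by linarith [hx.2]⟩ hxmem hx.2
      rw [h3] at this
      exact this
    rcases eq_or_lt_of_le hle with heq | hlt'
    · rw [heq]
    · exact (hmono ⟨hy.1, hle⟩ ⟨h1.le, le_refl _⟩ hlt').le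
  · -- decreasing on [xZero, 3π]
    have hmono : StrictAntiOn hfun (Icc xZero (3*π)) := by
      apply strictAntiOn_of_deriv_neg (convex_Icc _ _)
        (hfun_continuousOn (fun x hx => by
          rcases hx with ⟨ha, _⟩; intro h0; rw [h0] at ha; linarith))
      intro x hx
      rw [interior_Icc] at hx
      have hxpos : 0 < x := by linarith [hx.1]
      rw [(hfun_hasDerivAt hxpos.ne').deriv]
      apply div_neg_of_neg_of_pos _ (by positivity)
      have := gfun_strictAntiOn_I2 hxmem ⟨by linarith [hx.1], hx.2.le⟩ hx.1
      rw [h3] at this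
      exact this
    exact (hmono ⟨le_refl _, by linarith⟩ ⟨hlt.le, hy.2⟩ hlt).le

lemma hfun_xZero_lb : 2 / (5*π) ≤ hfun xZero := by
  have hpi := Real.pi_pos
  have h : hfun (5*π/2) = 2 / (5*π) := by
    unfold hfun
    have h5 : (5*π/2 : ℝ) = π/2 + 2*π := by ring
    rw [h5, Real.sin_add_two_pi, Real.sin_pi_div_two]
    rw [eq_div_iff (by positivity)]
    field_simp
    ring
  have := hfun_le_on_2pi_3pi (y := 5*π/2) ⟨by linarith, by linarith⟩
  linarith [h ▸ this]

lemma hfun_xZero_lt_half : hfun xZero < 1/2 := by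
  obtain ⟨h1, _, _⟩ := xZero_facts
  have hpi := Real.pi_gt_three
  have hxpos : 0 < xZero := by linarith
  unfold hfun
  rw [div_lt_iff₀ hxpos]
  nlinarith [Real.sin_le_one xZero]

theorem unique_solution_xc
    (δ β₀ β₁ : ℝ) (hδ : 0 < δ) (hβ₀ : 0 < β₀)
    (hβ₁ : β₁ < -δ / (β₀ * (1 - 2 * hfun xZero))) :
    hfun xZero < (δ + β₀ * β₁) / (2 * β₀ * β₁) ∧
    (δ + β₀ * β₁) / (2 * β₀ * β₁) < 1 / 2 ∧
    (∃! x : ℝ, 0 < x ∧ hfun x = (δ + β₀ * β₁) / (2 * β₀ * β₁)) ∧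
    (∀ x : ℝ, 0 < x → hfun x = (δ + β₀ * β₁) / (2 * β₀ * β₁) → x < Real.pi) := by
  have hpi := Real.pi_pos
  have hpi3 := Real.pi_gt_three
  have hpi4 := Real.pi_lt_four
  set A := hfun xZero with hAdef
  have hAhalf : A < 1/2 := hfun_xZero_lt_half
  have hAlb : 2/(5*π) ≤ A := hfun_xZero_lb
  have hApos : 0 < A := lt_of_lt_of_le (by positivity) hAlb
  have hden : 0 < β₀ * (1 - 2*A) := by nlinarith
  have hβ₁neg : β₁ < 0 := hβ₁.trans (div_neg_of_neg_of_pos (by linarith) hden)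
  have hmul : β₁ * (β₀ * (1 - 2*A)) < -δ := (lt_div_iff₀ hden).mp hβ₁
  have h2b : 2*β₀*β₁ < 0 := by nlinarith
  set c := (δ + β₀ * β₁) / (2 * β₀ * β₁) with hcdef
  have hAc : A < c := by
    rw [hcdef, lt_div_iff_of_neg h2b]
    nlinarith
  have hchalf : c < 1/2 := by
    rw [hcdef, div_lt_iff_of_neg h2b]
    nlinarith
  have hcpos : 0 < c := hApos.trans hAc
  -- bound for large arguments
  have hbig : ∀ y : ℝ, π ≤ y → hfun y < c := by
    intro y hy
    rcases le_or_gt y (2*π) with h2 | h2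
    · have hsin : Real.sin y ≤ 0 := by
        have h0 : 0 ≤ Real.sin (y - π) :=
          Real.sin_nonneg_of_nonneg_of_le_pi (by linarith) (by linarith)
        have heq : Real.sin ((y - π) + π) = -Real.sin (y - π) := Real.sin_add_pi _
        simp only [sub_add_cancel] at heq
        linarith
      have : hfun y ≤ 0 := div_nonpos_of_nonpos_of_nonneg hsin (by linarith)
      linarith
    rcases le_or_gt y (3*π) with h3 | h3
    · have := hfun_le_on_2pi_3pi ⟨h2.le, h3⟩
      linarith
    · have hypos : 0 < y := by linarith
      have hb1 : hfun y ≤ 1/y := (div_le_div_iff_of_pos_right hypos).mpr (Real.sin_le_one y)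
      have hb2 : 1/y < 2/(5*π) := by
        rw [div_lt_div_iff₀ hypos (by positivity)]
        nlinarith
      linarith
  have hlt_pi : ∀ x : ℝ, 0 < x → hfun x = c → x < π := by
    intro x hx hxc
    by_contra hge
    push_neg at hge
    exact absurd hxc (ne_of_lt (hbig x hge))
  -- existence by IVT on [π/2, π]
  have hcont : ContinuousOn hfun (Icc (π/2) π) := by
    apply hfun_continuousOn
    intro x hx
    rcases hx with ⟨ha, _⟩
    intro h0
    rw [h0] at ha
    linarith
  have hfpi : hfun π = 0 := by unfold hfun; simp [Real.sin_pi]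
  have hfpi2 : hfun (π/2) = 2/π := by
    unfold hfun
    rw [Real.sin_pi_div_two]
    field_simp
  have hmem : c ∈ Ioo (hfun π) (hfun (π/2)) := by
    rw [hfpi, hfpi2]
    refine ⟨hcpos, ?_⟩
    have : (1:ℝ)/2 < 2/π := by
      rw [div_lt_div_iff₀ two_pos hpi]
      linarith
    linarith
  obtain ⟨xc, hxc, hxceq⟩ := intermediate_value_Ioo' (by linarith : π/2 ≤ π) hcont hmem
  have hxcpos : 0 < xc := by linarith [hxc.1]
  refine ⟨hAc, hchalf, ⟨xc, ⟨hxcpos, hxceq⟩, ?_⟩, hlt_pi⟩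
  rintro y ⟨hy0, hyc⟩
  have hy_pi := hlt_pi y hy0 hyc
  exact hfun_strictAntiOn.injOn ⟨hy0, hy_pi.le⟩ ⟨hxcpos, hxc.2.le⟩ (hyc.trans hxceq.symm)
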